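/- Let n ≥ 2, let S be a set of pairs (i,j) with 1 ≤ i < j ≤ n, and set χ = −Σ_{(i,j)∈S} (e_i − e_j), a sum of distinct negative roots of A_{n−1}. If w ∈ S_n is such that w·χ = w(χ+ρ) − ρ is dominant, then w·χ = 0. -/

import Mathlib

/-- ρ = (n−1, n−2, …, 1, 0) for type A_{n−1} realized in ℤ^n. -/
def weylRho (n : ℕ) : Fin n → ℤ := fun i => (n : ℤ) - 1 - (i : ℕ)

/-- The action of `w ∈ S_n` on weights: `w(λ)_i = λ_{w⁻¹(i)}`. -/
def wAct {n : ℕ} (w : Equiv.Perm (Fin n)) (lam : Fin n → ℤ) : Fin n → ℤ :=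
  fun i => lam (w⁻¹ i)

/-- The dot action `w·λ = w(λ+ρ) − ρ`. -/
def dotAct {n : ℕ} (w : Equiv.Perm (Fin n)) (lam : Fin n → ℤ) : Fin n → ℤ :=
  fun i => lam (w⁻¹ i) + weylRho n (w⁻¹ i) - weylRho n i

/-- `λ` is dominant iff `λ_1 ≥ λ_2 ≥ ⋯ ≥ λ_n`. -/
def IsDominant {n : ℕ} (lam : Fin n → ℤ) : Prop :=
  ∀ i j : Fin n, i ≤ j → lam j ≤ lam i

/-- The root `e_i − e_j`. -/
def posRoot {n : ℕ} (i j : Fin n) : Fin n → ℤ :=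
  fun k => (if k = i then 1 else 0) - (if k = j then 1 else 0)

/-- Positive roots of A_{n−1}: `e_i − e_j` with `i < j`. -/
def IsPosRoot {n : ℕ} (x : Fin n → ℤ) : Prop :=
  ∃ i j : Fin n, i < j ∧ x = posRoot i j

/-- Negative roots of A_{n−1}. -/
def IsNegRoot {n : ℕ} (x : Fin n → ℤ) : Prop :=
  ∃ i j : Fin n, i < j ∧ x = -(posRoot i j)

/-- The length ℓ(w): the number of positive roots sent to negative roots by `w`,
i.e. the number of inversions of `w`. -/
def weylLen {n : ℕ} (w : Equiv.Perm (Fin n)) : ℕ :=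
  (Finset.univ.filter (fun p : Fin n × Fin n => p.1 < p.2 ∧ w p.2 < w p.1)).card

/-- If χ is a sum of distinct negative roots of A_{n−1} and w·χ is dominant,
then w·χ = 0. -/
theorem dot_of_sum_distinct_neg_roots_dominant_eq_zero (n : ℕ) (hn : 2 ≤ n)
    (S : Finset (Fin n × Fin n)) (hS : ∀ p ∈ S, p.1 < p.2)
    (w : Equiv.Perm (Fin n))
    (hdom : IsDominant (dotAct w (-(∑ p ∈ S, posRoot p.1 p.2)))) :
    dotAct w (-(∑ p ∈ S, posRoot p.1 p.2)) = 0 := by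
  set χ : Fin n → ℤ := -(∑ p ∈ S, posRoot p.1 p.2) with hχ
  -- entries of χ + ρ lie in [0, n-1]
  have hchi : ∀ k : Fin n, 0 ≤ χ k + weylRho n k ∧ χ k + weylRho n k ≤ (n : ℤ) - 1 := by
    intro k
    have hval : χ k = ((S.filter (fun p => k = p.2)).card : ℤ)
        - ((S.filter (fun p => k = p.1)).card : ℤ) := by
      have h1 : (∑ p ∈ S, posRoot p.1 p.2 k)
          = (∑ p ∈ S, (if k = p.1 then (1:ℤ) else 0))
            - (∑ p ∈ S, (if k = p.2 then (1:ℤ) else 0)) := by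
        rw [← Finset.sum_sub_distrib]; rfl
      have h2 : (∑ p ∈ S, (if k = p.1 then (1:ℤ) else 0))
          = ((S.filter (fun p => k = p.1)).card : ℤ) := by
        rw [Finset.sum_boole]
      have h3 : (∑ p ∈ S, (if k = p.2 then (1:ℤ) else 0))
          = ((S.filter (fun p => k = p.2)).card : ℤ) := by
        rw [Finset.sum_boole]
      simp only [hχ, Pi.neg_apply, Finset.sum_apply]
      rw [h1, h2, h3]; ring
    have hA : (S.filter (fun p => k = p.1)).card ≤ n - 1 - (k : ℕ) := by
      have : (S.filter (fun p => k = p.1)).card ≤ (Finset.Ioi k).card := by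
        apply Finset.card_le_card_of_injOn (fun p => p.2)
        · intro p hp
          simp only [Finset.mem_coe, Finset.mem_filter] at hp
          simp only [Finset.mem_coe, Finset.mem_Ioi]
          exact hp.2 ▸ hS p hp.1
        · intro p hp q hq hpq
          simp only [Finset.mem_coe, Finset.mem_filter] at hp hq
          exact Prod.ext (hp.2 ▸ hq.2 ▸ rfl) hpq
      simpa [Fin.card_Ioi] using this
    have hB : (S.filter (fun p => k = p.2)).card ≤ (k : ℕ) := by
      have : (S.filter (fun p => k = p.2)).card ≤ (Finset.Iio k).card := by
        apply Finset.card_le_card_of_injOn (fun p => p.1)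
        · intro p hp
          simp only [Finset.mem_coe, Finset.mem_filter] at hp
          simp only [Finset.mem_coe, Finset.mem_Iio]
          exact hp.2 ▸ hS p hp.1
        · intro p hp q hq hpq
          simp only [Finset.mem_coe, Finset.mem_filter] at hp hq
          exact Prod.ext hpq (hp.2 ▸ hq.2 ▸ rfl)
      simpa [Fin.card_Iio] using this
    have hk : (k : ℕ) ≤ n - 1 := by omega
    have hAz : ((S.filter (fun p => k = p.1)).card : ℤ) ≤ (n : ℤ) - 1 - (k : ℕ) := by
      have := (Int.ofNat_le.mpr hA); push_cast at this ⊢; omega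
    have hBz : ((S.filter (fun p => k = p.2)).card : ℤ) ≤ (k : ℕ) := by
      exact_mod_cast hB
    constructor <;> simp only [hval, weylRho] <;>
      [linarith [Int.ofNat_nonneg (S.filter (fun p => k = p.2)).card];
       linarith [Int.ofNat_nonneg (S.filter (fun p => k = p.1)).card]]
  set μ := dotAct w χ with hμ
  set g : Fin n → ℤ := fun k => μ k + weylRho n k with hg
  have hgval : ∀ k, g k = χ (w⁻¹ k) + weylRho n (w⁻¹ k) := by
    intro k; simp [hg, hμ, dotAct]
  have hgbound : ∀ k, 0 ≤ g k ∧ g k ≤ (n:ℤ) - 1 := fun k => hgval k ▸ hchi (w⁻¹ k)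
  -- g is strictly decreasing with gaps
  have hstep : ∀ i j : Fin n, i ≤ j → g j + ((j:ℕ):ℤ) - ((i:ℕ):ℤ) ≤ g i := by
    intro i j hij
    have := hdom i j hij
    simp only [hg, weylRho]
    linarith
  have hL : ((n - 1 : ℕ) : ℤ) = (n : ℤ) - 1 := by omega
  funext k
  have hk1 : k ≤ (⟨n-1, by omega⟩ : Fin n) := by
    rw [Fin.le_def]; simp; omega
  have hk0 : (⟨0, by omega⟩ : Fin n) ≤ k := by rw [Fin.le_def]; simp
  have h1 := hstep k ⟨n-1, by omega⟩ hk1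
  have h2 := hstep (⟨0, by omega⟩ : Fin n) k hk0
  have b1 := (hgbound (⟨n-1, by omega⟩ : Fin n)).1
  have b2 := (hgbound (⟨0, by omega⟩ : Fin n)).2
  simp only [Fin.val_mk] at h1 h2
  have : g k = (n:ℤ) - 1 - (k:ℕ) := by omega
  have : μ k = 0 := by
    have := this; simp only [hg, weylRho] at this; linarith
  simpa [hμ] using this
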